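/- The estimated reward of every arm is unbiased: for every y ∈ F, the expectation over the drawn arm x ~ p satisfies Σ_{x∈F} p_x·R̂_y(x) = Σ_{i=1}^N R_i^{(y_i)} + Σ_{(m,n)∈E} R_{mn}^{(y_m y_n)}, where R̂_y(x) denotes the estimated reward of arm y when the drawn arm is x. -/

import Mathlib

open Finset

/-- **Lemma 2 of the paper.**
The estimated reward of every arm is unbiased: for every `y ∈ F`, the expectation
over the drawn arm `x ~ p` satisfies
`Σ_{x∈F} p_x · R̂_y(x) = Σ_{i=1}^N R_i^{(y_i)} + Σ_{(m,n)∈E} R_{mn}^{(y_m y_n)}`. -/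
theorem mabsta_estimate_unbiased
    (N M : ℕ) (hN : 1 ≤ N) (hM : 1 ≤ M)
    (E : Finset (Fin N × Fin N)) (hE : ∀ e ∈ E, e.1 ≠ e.2)
    (p : (Fin N → Fin M) → ℝ)
    (hp0 : ∀ y, 0 ≤ p y) (hp1 : ∑ y : Fin N → Fin M, p y = 1)
    (R : Fin N → Fin M → ℝ) (hR : ∀ i j, R i j ∈ Set.Icc (0 : ℝ) 1)
    (Re : Fin N × Fin N → Fin M → Fin M → ℝ)
    (hRe : ∀ e ∈ E, ∀ j k, Re e j k ∈ Set.Icc (0 : ℝ) 1)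
    (hPex : ∀ (i : Fin N) (j : Fin M),
      0 < ∑ z ∈ Finset.univ.filter (fun z : Fin N → Fin M => z i = j), p z)
    (hPtx : ∀ e ∈ E, ∀ j k : Fin M,
      0 < ∑ z ∈ Finset.univ.filter
        (fun z : Fin N → Fin M => z e.1 = j ∧ z e.2 = k), p z)
    (Rhat : (Fin N → Fin M) → Fin N → Fin M → ℝ)
    (hRhat : ∀ (x : Fin N → Fin M) (i : Fin N) (j : Fin M), Rhat x i j =
      if j = x i then
        R i j / (∑ z ∈ Finset.univ.filter (fun z : Fin N → Fin M => z i = x i), p z)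
      else 0)
    (Rhate : (Fin N → Fin M) → Fin N × Fin N → Fin M → Fin M → ℝ)
    (hRhate : ∀ (x : Fin N → Fin M), ∀ e ∈ E, ∀ j k : Fin M, Rhate x e j k =
      if j = x e.1 ∧ k = x e.2 then
        Re e j k / (∑ z ∈ Finset.univ.filter
          (fun z : Fin N → Fin M => z e.1 = x e.1 ∧ z e.2 = x e.2), p z)
      else 0)
    (RhatArm : (Fin N → Fin M) → (Fin N → Fin M) → ℝ)
    (hRhatArm : ∀ x y, RhatArm x y =
      ∑ i, Rhat x i (y i) + ∑ e ∈ E, Rhate x e (y e.1) (y e.2)) :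
    ∀ y : Fin N → Fin M,
      ∑ x : Fin N → Fin M, p x * RhatArm x y
        = ∑ i, R i (y i) + ∑ e ∈ E, Re e (y e.1) (y e.2) := by
  intro y
  have h1 : ∀ i : Fin N, ∑ x : Fin N → Fin M, p x * Rhat x i (y i) = R i (y i) := by
    intro i
    set S : ℝ := ∑ z ∈ Finset.univ.filter (fun z : Fin N → Fin M => z i = y i), p z with hS
    have hSpos := hPex i (y i)
    have key : ∀ x : Fin N → Fin M, p x * Rhat x i (y i)
        = if x i = y i then p x * (R i (y i) / S) else 0 := by
      intro x
      rw [hRhat]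
      by_cases h : x i = y i
      · rw [if_pos h.symm, if_pos h]
        simp only [h]; rfl
      · rw [if_neg (fun h' => h h'.symm), if_neg h, mul_zero]
    calc ∑ x : Fin N → Fin M, p x * Rhat x i (y i)
        = ∑ x ∈ Finset.univ.filter (fun x : Fin N → Fin M => x i = y i),
            p x * (R i (y i) / S) := by
          rw [Finset.sum_filter]; exact Finset.sum_congr rfl fun x _ => key x
      _ = S * (R i (y i) / S) := by rw [← Finset.sum_mul]
      _ = R i (y i) := by have hS0 : S ≠ 0 := hSpos.ne'; field_simp
  have h2 : ∀ e ∈ E, ∑ x : Fin N → Fin M, p x * Rhate x e (y e.1) (y e.2)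
      = Re e (y e.1) (y e.2) := by
    intro e he
    set S : ℝ := ∑ z ∈ Finset.univ.filter
        (fun z : Fin N → Fin M => z e.1 = y e.1 ∧ z e.2 = y e.2), p z with hS
    have hSpos := hPtx e he (y e.1) (y e.2)
    have key : ∀ x : Fin N → Fin M, p x * Rhate x e (y e.1) (y e.2)
        = if x e.1 = y e.1 ∧ x e.2 = y e.2 then p x * (Re e (y e.1) (y e.2) / S) else 0 := by
      intro x
      rw [hRhate x e he]
      by_cases h : x e.1 = y e.1 ∧ x e.2 = y e.2
      · rw [if_pos ⟨h.1.symm, h.2.symm⟩, if_pos h]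
        simp only [h.1, h.2]; rfl
      · have h' : ¬ (y e.1 = x e.1 ∧ y e.2 = x e.2) := fun hc => h ⟨hc.1.symm, hc.2.symm⟩
        rw [if_neg h', if_neg h, mul_zero]
    calc ∑ x : Fin N → Fin M, p x * Rhate x e (y e.1) (y e.2)
        = ∑ x ∈ Finset.univ.filter
            (fun x : Fin N → Fin M => x e.1 = y e.1 ∧ x e.2 = y e.2),
            p x * (Re e (y e.1) (y e.2) / S) := by
          rw [Finset.sum_filter]; exact Finset.sum_congr rfl fun x _ => key x
      _ = S * (Re e (y e.1) (y e.2) / S) := by rw [← Finset.sum_mul]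
      _ = Re e (y e.1) (y e.2) := by have hS0 : S ≠ 0 := hSpos.ne'; field_simp
  simp_rw [hRhatArm, mul_add, Finset.sum_add_distrib, Finset.mul_sum]
  rw [Finset.sum_comm]
  congr 1
  · exact Finset.sum_congr rfl fun i _ => h1 i
  · rw [Finset.sum_comm]
    exact Finset.sum_congr rfl fun e he => h2 e he
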